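/- Let (V, Ω) be a 2n-dimensional real symplectic vector space. If k > n, then the only effective alternating k-form on V is zero, i.e. Λ_ε^k = 0 for k > n. -/

import Mathlib

open scoped TensorProduct

namespace SymplSS

variable {V : Type*} [AddCommGroup V] [Module ℝ V]

/-- The wedge product of two real-valued alternating forms (shuffle convention, so that
`(dq ∧ dp)(e, f) = dq(e) dp(f) - dq(f) dp(e)`). -/
noncomputable def wedge {k l : ℕ} (ω : V [⋀^Fin k]→ₗ[ℝ] ℝ) (η : V [⋀^Fin l]→ₗ[ℝ] ℝ) :
    V [⋀^Fin (k + l)]→ₗ[ℝ] ℝ :=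
  AlternatingMap.domDomCongr finSumFinEquiv
    ((TensorProduct.lid ℝ ℝ).toLinearMap.compAlternatingMap (ω.domCoprod η))

/-- The operator `⊥ : Λ^k → Λ^(k-2)`, `⊥ω = ∑ i, ι_(f i) (ι_(e i) ω)`;
for forms of degree `< 2` it is `0`. -/
noncomputable def lower {n : ℕ} (e f : Fin n → V) :
    ∀ {k : ℕ}, (V [⋀^Fin k]→ₗ[ℝ] ℝ) → V [⋀^Fin (k - 2)]→ₗ[ℝ] ℝ
  | 0, _ => 0
  | 1, _ => 0
  | (_ + 2), ω => ∑ i, ((ω.curryLeft (e i)).curryLeft (f i))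

/-- A form is *effective* iff `⊥ω = 0`. -/
def IsEff {n : ℕ} (e f : Fin n → V) {k : ℕ} (ω : V [⋀^Fin k]→ₗ[ℝ] ℝ) : Prop :=
  lower e f ω = 0

/-- `e 1, …, e n, f 1, …, f n` is a symplectic basis for the alternating 2-form `Ω`. -/
structure IsSymplecticBasis {n : ℕ} (Ω : V [⋀^Fin 2]→ₗ[ℝ] ℝ) (e f : Fin n → V) : Prop where
  indep : LinearIndependent ℝ (Sum.elim e f)
  span : Submodule.span ℝ (Set.range (Sum.elim e f)) = ⊤
  ee : ∀ i j, Ω ![e i, e j] = 0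
  ff : ∀ i j, Ω ![f i, f j] = 0
  ef : ∀ i j, Ω ![e i, f j] = if i = j then 1 else 0

/-- Nondegeneracy of an alternating 2-form. -/
def Nondeg (Ω : V [⋀^Fin 2]→ₗ[ℝ] ℝ) : Prop :=
  ∀ v : V, (∀ w : V, Ω ![v, w] = 0) → v = 0

/-- The `i`-th wedge power `Ω^{∧ i}` of a 2-form. -/
noncomputable def omegaPow (Ω : V [⋀^Fin 2]→ₗ[ℝ] ℝ) : ∀ i : ℕ, V [⋀^Fin (2 * i)]→ₗ[ℝ] ℝ
  | 0 => AlternatingMap.constOfIsEmpty ℝ V (Fin 0) 1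
  | (i + 1) => wedge (omegaPow Ω i) Ω

/-- Reindexing a form along an equality of degrees. -/
noncomputable def castForm {a b : ℕ} (h : a = b) (ω : V [⋀^Fin a]→ₗ[ℝ] ℝ) :
    V [⋀^Fin b]→ₗ[ℝ] ℝ :=
  AlternatingMap.domDomCongr (finCongr h) ω

/-- `Ω^{∧ i} ∧ η` as a `k`-form, for `η` a `(k - 2i)`-form; it is `0` when `k - 2i < 0`. -/
noncomputable def omegaPowWedge (Ω : V [⋀^Fin 2]→ₗ[ℝ] ℝ) (k i : ℕ)
    (η : V [⋀^Fin (k - 2 * i)]→ₗ[ℝ] ℝ) : V [⋀^Fin k]→ₗ[ℝ] ℝ :=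
  if h : 2 * i ≤ k then castForm (by omega) (wedge (omegaPow Ω i) η) else 0

/-- `Ω ∧ η` as a `k`-form, for `η` a `(k-2)`-form; it is `0` when `k - 2 < 0`. -/
noncomputable def wedgeOmega (Ω : V [⋀^Fin 2]→ₗ[ℝ] ℝ) (k : ℕ)
    (η : V [⋀^Fin (k - 2)]→ₗ[ℝ] ℝ) : V [⋀^Fin k]→ₗ[ℝ] ℝ :=
  if h : 2 ≤ k then castForm (by omega) (wedge Ω η) else 0

/-- Iterated `⊥`: `⊥^j : Λ^k → Λ^(k - 2j)`. -/
noncomputable def lowerIter {n : ℕ} (e f : Fin n → V) :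
    ∀ (j : ℕ) {k : ℕ}, (V [⋀^Fin k]→ₗ[ℝ] ℝ) → V [⋀^Fin (k - 2 * j)]→ₗ[ℝ] ℝ
  | 0, _, ω => ω
  | (j + 1), _, ω => lower e f (lowerIter e f j ω)

/-- The composite `⊤ ∘ ⊥ : Λ^k → Λ^k` (it is `0` in degrees `< 2`, where `⊥ = 0`). -/
noncomputable def raiseLower {n : ℕ} (e f : Fin n → V) (Ω : V [⋀^Fin 2]→ₗ[ℝ] ℝ) :
    ∀ {k : ℕ}, (V [⋀^Fin k]→ₗ[ℝ] ℝ) → V [⋀^Fin k]→ₗ[ℝ] ℝ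
  | 0, _ => 0
  | 1, _ => 0
  | (_ + 2), ω => wedge (lower e f ω) Ω

/-- `⊥` as a linear map. -/
noncomputable def lowerHom {n : ℕ} (e f : Fin n → V) (k : ℕ) :
    (V [⋀^Fin k]→ₗ[ℝ] ℝ) →ₗ[ℝ] (V [⋀^Fin (k - 2)]→ₗ[ℝ] ℝ) where
  toFun := lower e f
  map_add' ω ω' := by
    match k with
    | 0 => simp [lower]
    | 1 => simp [lower]
    | (m + 2) =>
      show (∑ i, (((ω + ω').curryLeft (e i)).curryLeft (f i))) = _
      simp only [AlternatingMap.curryLeft_add, LinearMap.add_apply, Finset.sum_add_distrib]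
      rfl
  map_smul' c ω := by
    match k with
    | 0 => simp [lower]
    | 1 => simp [lower]
    | (m + 2) =>
      show (∑ i, (((c • ω).curryLeft (e i)).curryLeft (f i))) = _
      simp only [AlternatingMap.curryLeft_smul, LinearMap.smul_apply, Finset.smul_sum,
        RingHom.id_apply]
      show _ = c • ∑ i, ((ω.curryLeft (e i)).curryLeft (f i))
      rw [Finset.smul_sum]

/-- The space `Λ_ε^k` of effective `k`-forms, as a submodule. -/
noncomputable def effSubmodule {n : ℕ} (e f : Fin n → V) (k : ℕ) :
    Submodule ℝ (V [⋀^Fin k]→ₗ[ℝ] ℝ) :=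
  LinearMap.ker (lowerHom e f k)

/-- Left wedge with a fixed form, as a linear map. -/
noncomputable def wedgeHom {k : ℕ} (ω : V [⋀^Fin k]→ₗ[ℝ] ℝ) (l : ℕ) :
    (V [⋀^Fin l]→ₗ[ℝ] ℝ) →ₗ[ℝ] (V [⋀^Fin (k + l)]→ₗ[ℝ] ℝ) where
  toFun := wedge ω
  map_add' η η' := by
    simp only [wedge, ← AlternatingMap.domCoprod'_apply, TensorProduct.tmul_add, map_add,
      LinearMap.compAlternatingMap_add, AlternatingMap.domDomCongr_add]
  map_smul' c η := by
    simp only [wedge, ← AlternatingMap.domCoprod'_apply, TensorProduct.tmul_smul, map_smul,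
      LinearMap.compAlternatingMap_smul, AlternatingMap.domDomCongr_smul, RingHom.id_apply]

/-- `castForm` as a linear map. -/
noncomputable def castHom {a b : ℕ} (h : a = b) :
    (V [⋀^Fin a]→ₗ[ℝ] ℝ) →ₗ[ℝ] (V [⋀^Fin b]→ₗ[ℝ] ℝ) :=
  (AlternatingMap.domDomCongrₗ ℝ (finCongr h)).toLinearMap

/-- The subspace `Ω^{∧ i} ∧ Λ^(k - 2i)` of `Λ^k` (the zero subspace when `k - 2i < 0`). -/
noncomputable def idealPiece (Ω : V [⋀^Fin 2]→ₗ[ℝ] ℝ) (k i : ℕ) :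
    Submodule ℝ (V [⋀^Fin k]→ₗ[ℝ] ℝ) :=
  if h : 2 * i ≤ k then
    (LinearMap.range (wedgeHom (omegaPow Ω i) (k - 2 * i))).map (castHom (by omega))
  else ⊥

/-- A Lagrangian subspace of a `2n`-dimensional symplectic vector space. -/
def IsLagrangian {n : ℕ} (Ω : V [⋀^Fin 2]→ₗ[ℝ] ℝ) (L : Submodule ℝ V) : Prop :=
  Module.finrank ℝ L = n ∧ ∀ u ∈ L, ∀ v ∈ L, Ω ![u, v] = 0


/-! ### Auxiliary machinery for Statement 4 -/


section Comb
variable {α : Type*} [Fintype α] [DecidableEq α]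

/-- "Up" operator on functions on finsets. -/
def upOp (c : Finset α → ℝ) (Q : Finset α) : ℝ := ∑ j ∈ Qᶜ, c (insert j Q)

/-- "Down" operator on functions on finsets. -/
def downOp (c : Finset α → ℝ) (S : Finset α) : ℝ := ∑ i ∈ S, c (S.erase i)

lemma upOp_downOp (c : Finset α → ℝ) (S : Finset α) :
    upOp (downOp c) S = downOp (upOp c) S
      + ((Fintype.card α : ℝ) - 2 * S.card) * c S := by
  have h1 : upOp (downOp c) S
      = ∑ j ∈ Sᶜ, (c S + ∑ i ∈ S, c (insert j (S.erase i))) := by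
    refine Finset.sum_congr rfl fun j hj => ?_
    have hjS : j ∉ S := by simpa using hj
    rw [downOp, Finset.sum_insert hjS, Finset.erase_insert hjS]
    congr 1
    refine Finset.sum_congr rfl fun i hi => ?_
    congr 1
    rw [Finset.erase_insert_of_ne (by rintro rfl; exact hjS hi)]
  have h2 : downOp (upOp c) S
      = ∑ i ∈ S, (c S + ∑ j ∈ Sᶜ, c (insert j (S.erase i))) := by
    refine Finset.sum_congr rfl fun i hi => ?_
    have hcompl : (S.erase i)ᶜ = insert i Sᶜ := by
      ext x; by_cases hx : x = i <;> simp [hx, Finset.mem_erase, hi]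
    rw [upOp, hcompl, Finset.sum_insert (by simp [hi]), Finset.insert_erase hi]
  rw [h1, h2, Finset.sum_add_distrib, Finset.sum_add_distrib, Finset.sum_const,
    Finset.sum_const, Finset.card_compl]
  rw [Finset.sum_comm]
  push_cast
  have hle : (S.card : ℝ) ≤ (Fintype.card α : ℝ) := by
    exact_mod_cast Finset.card_le_univ S
  ring_nf
  rw [Nat.cast_sub (Finset.card_le_univ S)]
  ring

variable (m : ℕ) (c : Finset α → ℝ)

/-- The eigenvalue sequence. -/
noncomputable def lam (m : ℕ) : ℕ → ℝ
  | 0 => 0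
  | (j + 1) => lam m j + ((Fintype.card α : ℝ) - 2 * (m + j))

lemma lam_neg (hm : Fintype.card α < 2 * m) : ∀ j, lam (α := α) m j ≤ 0 ∧ (1 ≤ j → lam (α := α) m j < 0) := by
  intro j
  induction j with
  | zero => simp [lam]
  | succ j ih =>
    have hstep : ((Fintype.card α : ℝ) - 2 * (m + j)) < 0 := by
      have : (Fintype.card α : ℝ) < 2 * m := by exact_mod_cast hm
      have h2 : (0:ℝ) ≤ 2 * (j:ℝ) := by positivity
      push_cast; linarith
    constructor
    · rw [lam]; nlinarith [ih.1]
    · intro _; rw [lam]; nlinarith [ih.1]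

lemma step_lemma (hrel : ∀ Q : Finset α, Q.card + 1 = m → upOp c Q = 0) :
    ∀ (j : ℕ) (S : Finset α), S.card + 1 = m + j + 1 →
      upOp (downOp^[j + 1] c) S = lam (α := α) m (j + 1) * (downOp^[j] c) S := by
  intro j
  induction j with
  | zero =>
    intro S hS
    rw [Function.iterate_one, upOp_downOp]
    have hdown : downOp (upOp c) S = 0 := by
      rw [downOp]
      refine Finset.sum_eq_zero fun i hi => ?_
      have hpos := Finset.card_pos.mpr ⟨i, hi⟩
      have hc : (S.erase i).card + 1 = m := by
        rw [Finset.card_erase_of_mem hi]; omega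
      exact hrel _ hc
    rw [hdown]
    simp only [lam, Function.iterate_zero, id_eq]
    have : S.card = m := by omega
    rw [this]
    ring
  | succ j ih =>
    intro S hS
    have hit : downOp^[j + 1 + 1] c = downOp (downOp^[j+1] c) := by
      rw [Function.iterate_succ_apply']
    rw [hit, upOp_downOp]
    have hdown : downOp (upOp (downOp^[j+1] c)) S
        = lam (α := α) m (j+1) * downOp (downOp^[j] c) S := by
      rw [downOp, downOp, Finset.mul_sum]
      refine Finset.sum_congr rfl fun i hi => ?_
      rw [ih (S.erase i) (by rw [Finset.card_erase_of_mem hi]; omega)]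
    rw [hdown]
    have hrw : downOp (downOp^[j] c) S = downOp^[j+1] c S := by
      rw [Function.iterate_succ_apply']
    rw [hrw]
    have hcard : (S.card : ℝ) = (m : ℝ) + (j : ℝ) + 1 := by exact_mod_cast (by omega : S.card = m + j + 1)
    rw [hcard]
    show _ = lam (α := α) m (j + 1 + 1) * _
    conv_rhs => rw [lam]
    push_cast
    ring

/-- Main combinatorial lemma: if `|α| < 2m` and `upOp c` vanishes on `(m-1)`-sets then
`c` vanishes on `m`-sets. -/
lemma comb_main (hm : Fintype.card α < 2 * m)
    (hrel : ∀ Q : Finset α, Q.card + 1 = m → upOp c Q = 0) :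
    ∀ S : Finset α, S.card = m → c S = 0 := by
  have key : ∀ (e d : ℕ), d + e = Fintype.card α + 1 →
      ∀ S : Finset α, S.card = m + d → downOp^[d] c S = 0 := by
    intro e
    induction e with
    | zero =>
      intro d hd S hS
      exfalso
      have := Finset.card_le_univ S
      omega
    | succ e ih =>
      intro d hd S hS
      have h0 : upOp (downOp^[d + 1] c) S = lam (α := α) m (d + 1) * downOp^[d] c S :=
        step_lemma m c hrel d S (by omega)
      have h1 : upOp (downOp^[d + 1] c) S = 0 := by
        rw [upOp]
        refine Finset.sum_eq_zero fun j hj => ?_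
        refine ih (d + 1) (by omega) _ ?_
        rw [Finset.card_insert_of_notMem (by simpa using hj)]
        omega
      have hlam : lam (α := α) m (d + 1) ≠ 0 := ne_of_lt ((lam_neg m hm (d+1)).2 (by omega))
      have h2 := h1.symm.trans h0
      rcases mul_eq_zero.mp h2.symm with h | h
      · exact absurd h hlam
      · exact h
  intro S hS
  have := key (Fintype.card α + 1) 0 (by omega) S (by omega)
  simpa using this

end Comb


noncomputable def castForm' {V : Type*} [AddCommGroup V] [Module ℝ V] {a b : ℕ} (h : a = b)
    (ω : V [⋀^Fin a]→ₗ[ℝ] ℝ) : V [⋀^Fin b]→ₗ[ℝ] ℝ :=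
  AlternatingMap.domDomCongr (finCongr h) ω

section Forms
variable {V : Type*} [AddCommGroup V] [Module ℝ V] {n : ℕ}

/-- Plug two vectors into the first two slots of an alternating form (0 if degree < 2). -/
noncomputable def insPair (a b : V) :
    ∀ {k : ℕ}, (V [⋀^Fin k]→ₗ[ℝ] ℝ) → V [⋀^Fin (k - 2)]→ₗ[ℝ] ℝ
  | 0, _ => 0
  | 1, _ => 0
  | (_ + 2), ω => (ω.curryLeft a).curryLeft b

lemma insPair_apply (a b : V) {k : ℕ} (ω : V [⋀^Fin (k + 2)]→ₗ[ℝ] ℝ) (u : Fin k → V) :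
    insPair a b ω u = ω (Fin.cons a (Fin.cons b u)) := rfl

lemma insPair_zero (a b : V) {k : ℕ} : insPair a b (0 : V [⋀^Fin k]→ₗ[ℝ] ℝ) = 0 := by
  match k with
  | 0 => rfl
  | 1 => rfl
  | (m + 2) =>
    show ((0 : V [⋀^Fin (m+2)]→ₗ[ℝ] ℝ).curryLeft a).curryLeft b = 0
    simp

lemma insPair_comm (a b c d : V) {k : ℕ} (ω : V [⋀^Fin k]→ₗ[ℝ] ℝ) :
    insPair a b (insPair c d ω) = insPair c d (insPair a b ω) := by
  match k with
  | 0 => rfl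
  | 1 => rfl
  | 2 => show insPair a b (_ : V [⋀^Fin 0]→ₗ[ℝ] ℝ) = insPair c d (_ : V [⋀^Fin 0]→ₗ[ℝ] ℝ); rfl
  | 3 => show insPair a b (_ : V [⋀^Fin 1]→ₗ[ℝ] ℝ) = insPair c d (_ : V [⋀^Fin 1]→ₗ[ℝ] ℝ); rfl
  | (m + 4) =>
    ext u
    show ω (Fin.cons c (Fin.cons d (Fin.cons a (Fin.cons b u))))
      = ω (Fin.cons a (Fin.cons b (Fin.cons c (Fin.cons d u))))
    have h1 : (Fin.cons c (Fin.cons d (Fin.cons a (Fin.cons b u))) : Fin (m+4) → V)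
        = (Fin.cons a (Fin.cons d (Fin.cons c (Fin.cons b u))) : Fin (m+4) → V)
          ∘ Equiv.swap (0 : Fin (m+4)) 2 := by
      funext x
      refine Fin.cases ?_ (fun x1 => Fin.cases ?_ (fun x2 => Fin.cases ?_ (fun x3 => ?_) x2) x1) x
      · simp [Equiv.swap_apply_of_ne_of_ne, show ((0:Fin (m+4)) = 0) from rfl]
        rfl
      · rfl
      · rfl
      · rfl
    have h2 : (Fin.cons a (Fin.cons d (Fin.cons c (Fin.cons b u))) : Fin (m+4) → V)
        = (Fin.cons a (Fin.cons b (Fin.cons c (Fin.cons d u))) : Fin (m+4) → V)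
          ∘ Equiv.swap (1 : Fin (m+4)) 3 := by
      funext x
      refine Fin.cases ?_ (fun x1 => Fin.cases ?_ (fun x2 => Fin.cases ?_
        (fun x3 => Fin.cases ?_ (fun x4 => ?_) x3) x2) x1) x
      · rfl
      · rfl
      · rfl
      · rfl
      · rfl
    have hne02 : (0 : Fin (m+4)) ≠ 2 :=
      Fin.ne_of_val_ne (by rw [show ((0:Fin (m+4)):ℕ) = 0 from rfl,
        show ((2:Fin (m+4)):ℕ) = 2 from rfl]; omega)
    have hne13 : (1 : Fin (m+4)) ≠ 3 :=
      Fin.ne_of_val_ne (by rw [show ((1:Fin (m+4)):ℕ) = 1 from rfl,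
        show ((3:Fin (m+4)):ℕ) = 3 from rfl]; omega)
    rw [h1, AlternatingMap.map_swap _ _ hne02, h2, AlternatingMap.map_swap _ _ hne13, neg_neg]

variable (e f : Fin n → V)

/-- The tuple `(g₁ j₁, g₂ j₁, g₁ j₂, g₂ j₂, …, s)` built from a list of indices and a tail. -/
def tupG {X : Type*} (g₁ g₂ : Fin n → X) {t : ℕ} (s : Fin t → X) :
    (l : List (Fin n)) → Fin (t + 2 * l.length) → X
  | [] => s
  | (j :: l) => Fin.cons (g₁ j) (Fin.cons (g₂ j) (tupG g₁ g₂ s l))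

lemma tupG_comp {X Y : Type*} (g₁ g₂ : Fin n → X) {t : ℕ} (s : Fin t → X) (B : X → Y) :
    ∀ (l : List (Fin n)), B ∘ tupG g₁ g₂ s l = tupG (B ∘ g₁) (B ∘ g₂) (B ∘ s) l
  | [] => rfl
  | (j :: l) => by
    show B ∘ (Fin.cons (g₁ j) (Fin.cons (g₂ j) (tupG g₁ g₂ s l))) = _
    rw [Fin.comp_cons, Fin.comp_cons, tupG_comp g₁ g₂ s B l]
    rfl

lemma tupG_mem {X : Type*} (g₁ g₂ : Fin n → X) {t : ℕ} (s : Fin t → X) {j : Fin n} :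
    ∀ {l : List (Fin n)}, j ∈ l → (∃ p, tupG g₁ g₂ s l p = g₁ j) ∧ ∃ p, tupG g₁ g₂ s l p = g₂ j
  | (j' :: l), hj => by
    rcases List.mem_cons.mp hj with h | h
    · subst h
      exact ⟨⟨(0 : Fin (t + 2 * l.length + 2)), rfl⟩, ⟨(1 : Fin (t + 2 * l.length + 2)), rfl⟩⟩
    · obtain ⟨⟨p1, hp1⟩, ⟨p2, hp2⟩⟩ := tupG_mem g₁ g₂ s h
      refine ⟨⟨p1.succ.succ, ?_⟩, ⟨p2.succ.succ, ?_⟩⟩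
      · show (Fin.cons (g₁ j') (Fin.cons (g₂ j') (tupG g₁ g₂ s l)) : Fin (t + 2 * l.length + 2) → X) p1.succ.succ = g₁ j
        rw [Fin.cons_succ, Fin.cons_succ]; exact hp1
      · show (Fin.cons (g₁ j') (Fin.cons (g₂ j') (tupG g₁ g₂ s l)) : Fin (t + 2 * l.length + 2) → X) p2.succ.succ = g₂ j
        rw [Fin.cons_succ, Fin.cons_succ]; exact hp2

lemma tupG_mem_s {X : Type*} (g₁ g₂ : Fin n → X) {t : ℕ} (s : Fin t → X) (q : Fin t) :
    ∀ (l : List (Fin n)), ∃ p, tupG g₁ g₂ s l p = s q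
  | [] => ⟨q, rfl⟩
  | (j :: l) => by
    obtain ⟨p, hp⟩ := tupG_mem_s g₁ g₂ s q l
    refine ⟨p.succ.succ, ?_⟩
    show (Fin.cons (g₁ j) (Fin.cons (g₂ j) (tupG g₁ g₂ s l)) : Fin (t + 2 * l.length + 2) → X) p.succ.succ = s q
    rw [Fin.cons_succ, Fin.cons_succ]; exact hp

lemma tupG_range {X : Type*} (g₁ g₂ : Fin n → X) {t : ℕ} (s : Fin t → X) :
    ∀ (l : List (Fin n)),
      Set.range (tupG g₁ g₂ s l) = (g₁ '' {j | j ∈ l}) ∪ (g₂ '' {j | j ∈ l}) ∪ Set.range s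
  | [] => by
    show Set.range s = _
    simp
  | (j :: l) => by
    show Set.range (Fin.cons (g₁ j) (Fin.cons (g₂ j) (tupG g₁ g₂ s l))) = _
    rw [Fin.range_cons, Fin.range_cons, tupG_range g₁ g₂ s l]
    have hmem : {x | x ∈ j :: l} = insert j {x | x ∈ l} := by ext; simp
    rw [hmem, Set.image_insert_eq, Set.image_insert_eq]
    simp only [Set.insert_union, Set.union_insert]
    rw [Set.insert_comm]

lemma tupG_injective {X : Type*} (g₁ g₂ : Fin n → X) {t : ℕ} (s : Fin t → X)
    (hg : Function.Injective (Sum.elim g₁ g₂ : Fin n ⊕ Fin n → X))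
    (hs : Function.Injective s) :
    ∀ (l : List (Fin n)), l.Nodup →
      (∀ j ∈ l, g₁ j ∉ Set.range s ∧ g₂ j ∉ Set.range s) →
      Function.Injective (tupG g₁ g₂ s l)
  | [], _, _ => hs
  | (j :: l), hnd, hdis => by
    have hg1 : Function.Injective g₁ := fun a b h => by
      have := hg (show Sum.elim g₁ g₂ (Sum.inl a) = Sum.elim g₁ g₂ (Sum.inl b) from h)
      simpa using this
    have hg2 : Function.Injective g₂ := fun a b h => by
      have := hg (show Sum.elim g₁ g₂ (Sum.inr a) = Sum.elim g₁ g₂ (Sum.inr b) from h)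
      simpa using this
    have hg12 : ∀ a b, g₁ a ≠ g₂ b := fun a b h => by
      have := hg (show Sum.elim g₁ g₂ (Sum.inl a) = Sum.elim g₁ g₂ (Sum.inr b) from h)
      simp at this
    have hnd' := List.nodup_cons.mp hnd
    have ih := tupG_injective g₁ g₂ s hg hs l hnd'.2
      (fun i hi => hdis i (List.mem_cons_of_mem _ hi))
    have hrange := tupG_range g₁ g₂ s l
    show Function.Injective (Fin.cons (g₁ j) (Fin.cons (g₂ j) (tupG g₁ g₂ s l)))
    rw [Fin.cons_injective_iff]
    refine ⟨?_, ?_⟩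
    · rw [Fin.range_cons]
      rintro (h | h)
      · exact hg12 j j h
      · rw [hrange] at h
        rcases h with (⟨y, hy, hxy⟩ | ⟨y, hy, hxy⟩) | h
        · exact hnd'.1 (by rwa [hg1 hxy] at hy)
        · exact hg12 j y hxy.symm
        · exact (hdis j List.mem_cons_self).1 h
    rw [Fin.cons_injective_iff]
    refine ⟨?_, ih⟩
    · rw [hrange]
      rintro ((⟨y, hy, hxy⟩ | ⟨y, hy, hxy⟩) | h)
      · exact hg12 y j hxy
      · exact hnd'.1 (by rwa [hg2 hxy] at hy)
      · exact (hdis j List.mem_cons_self).2 h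

variable {t : ℕ} (s : Fin t → V)

/-- The value `ω (e j₁, f j₁, …, e jₘ, f jₘ, s)` of a form on pair-blocks followed by a tail,
defined by currying; `0` if the degrees don't match. -/
noncomputable def valL : (l : List (Fin n)) → ∀ {k : ℕ}, (V [⋀^Fin k]→ₗ[ℝ] ℝ) → ℝ
  | [], k, ω => if h : k = t then castForm' h ω s else 0
  | (j :: l), _, ω => valL l (insPair (e j) (f j) ω)

lemma valL_zero : ∀ (l : List (Fin n)) {k : ℕ}, valL e f s l (0 : V [⋀^Fin k]→ₗ[ℝ] ℝ) = 0
  | [], k => by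
    rw [valL]
    split
    · simp [castForm']
    · rfl
  | (j :: l), k => by rw [valL, insPair_zero]; exact valL_zero l

lemma valL_perm {l₁ l₂ : List (Fin n)} (hp : l₁.Perm l₂) :
    ∀ {k : ℕ} (ω : V [⋀^Fin k]→ₗ[ℝ] ℝ), valL e f s l₁ ω = valL e f s l₂ ω := by
  induction hp with
  | nil => intro k ω; rfl
  | cons x _ ih => intro k ω; rw [valL, valL]; exact ih _
  | swap x y l => intro k ω; rw [valL, valL, valL, valL, insPair_comm]
  | trans _ _ ih1 ih2 => intro k ω; rw [ih1, ih2]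

lemma valL_apply : ∀ (l : List (Fin n)) {k : ℕ} (h : k = t + 2 * l.length)
    (ω : V [⋀^Fin k]→ₗ[ℝ] ℝ),
    valL e f s l ω = ω (fun i => tupG e f s l (finCongr h i))
  | [], k, h, ω => by
    rw [valL, dif_pos (show k = t from h)]
    rfl
  | (j :: l), k, h, ω => by
    subst h
    rw [valL]
    rw [valL_apply l rfl]
    have : insPair (e j) (f j) ω (fun i => tupG e f s l (finCongr rfl i))
        = ω (Fin.cons (e j) (Fin.cons (f j) (fun i => tupG e f s l (finCongr rfl i)))) := rfl
    refine this.trans (congrArg (fun u => ω u) ?_)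
    funext x
    exact Fin.cases rfl (fun x1 => Fin.cases rfl (fun x2 => rfl) x1) x

lemma valL_ne (l : List (Fin n)) : ∀ {k : ℕ} (ω : V [⋀^Fin k]→ₗ[ℝ] ℝ),
    k ≠ t + 2 * l.length → valL e f s l ω = 0 := by
  induction l with
  | nil => intro k ω h; rw [valL, dif_neg (by simpa using h)]
  | cons j l ih =>
    intro k ω h
    rw [valL]
    by_cases hk : 2 ≤ k
    · refine ih _ ?_
      simp only [List.length_cons] at h ⊢
      omega
    · have hk2 : k = 0 ∨ k = 1 := by omega
      rcases hk2 with rfl | rfl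
      · rw [show (insPair (e j) (f j) (ω : V [⋀^Fin 0]→ₗ[ℝ] ℝ)) = 0 from rfl]
        exact valL_zero e f s l
      · rw [show (insPair (e j) (f j) (ω : V [⋀^Fin 1]→ₗ[ℝ] ℝ)) = 0 from rfl]
        exact valL_zero e f s l

lemma tupG_cons_succ {X : Type*} (g₁ g₂ : Fin n → X) {t : ℕ} (s : Fin t → X) (j : Fin n)
    (l : List (Fin n)) (p : Fin (t + 2 * l.length)) :
    tupG g₁ g₂ s (j :: l) p.succ.succ = tupG g₁ g₂ s l p := by
  show (Fin.cons (g₁ j) (Fin.cons (g₂ j) (tupG g₁ g₂ s l)) :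
    Fin (t + 2 * l.length + 2) → X) p.succ.succ = _
  rw [Fin.cons_succ, Fin.cons_succ]

lemma tupG_not_inj_of_mem {X : Type*} (g₁ g₂ : Fin n → X) {t : ℕ} (s : Fin t → X)
    {j : Fin n} {l : List (Fin n)} (hj : j ∈ l) :
    ¬ Function.Injective (tupG g₁ g₂ s (j :: l)) := by
  obtain ⟨p, hp⟩ := (tupG_mem g₁ g₂ s hj).1
  intro hinj
  have h0 : tupG g₁ g₂ s (j :: l) (0 : Fin (t + 2 * l.length + 2)) = g₁ j := rfl
  have h2 : tupG g₁ g₂ s (j :: l) p.succ.succ = g₁ j := by rw [tupG_cons_succ]; exact hp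
  have hv := congrArg Fin.val (hinj (h0.trans h2.symm))
  simp [Fin.val_succ] at hv

lemma tupG_not_inj_of_s {X : Type*} (g₁ g₂ : Fin n → X) {t : ℕ} (s : Fin t → X)
    {j : Fin n} {l : List (Fin n)} {q : Fin t} (hq : s q = g₁ j ∨ s q = g₂ j) :
    ¬ Function.Injective (tupG g₁ g₂ s (j :: l)) := by
  obtain ⟨p, hp⟩ := tupG_mem_s g₁ g₂ s q l
  intro hinj
  rcases hq with hq | hq
  · have h0 : tupG g₁ g₂ s (j :: l) (0 : Fin (t + 2 * l.length + 2)) = g₁ j := rfl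
    have h2 : tupG g₁ g₂ s (j :: l) p.succ.succ = g₁ j := by
      rw [tupG_cons_succ, hp]; exact hq
    have hv := congrArg Fin.val (hinj (h0.trans h2.symm))
    simp [Fin.val_succ] at hv
  · have h0 : tupG g₁ g₂ s (j :: l) (1 : Fin (t + 2 * l.length + 2)) = g₂ j := rfl
    have h2 : tupG g₁ g₂ s (j :: l) p.succ.succ = g₂ j := by
      rw [tupG_cons_succ, hp]; exact hq
    have hv := congrArg Fin.val (hinj (h0.trans h2.symm))
    simp [Fin.val_succ] at hv
    rw [Nat.mod_eq_of_lt (by omega)] at hv; omega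

lemma valL_notinj (l : List (Fin n)) {k : ℕ} (ω : V [⋀^Fin k]→ₗ[ℝ] ℝ)
    (h : k = t + 2 * l.length → ¬ Function.Injective (tupG e f s l)) :
    valL e f s l ω = 0 := by
  by_cases hd : k = t + 2 * l.length
  · rw [valL_apply e f s l hd]
    apply AlternatingMap.map_eq_zero_of_not_injective
    intro hinj
    apply h hd
    have heq : tupG e f s l = (fun i => tupG e f s l (finCongr hd i)) ∘ (finCongr hd).symm := by
      funext p; simp
    rw [heq]
    exact hinj.comp (finCongr hd).symm.injective
  · exact valL_ne e f s l ω hd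

end Forms

lemma altSum_apply {V : Type*} [AddCommGroup V] [Module ℝ V] {k : ℕ} {ι : Type*}
    (s : Finset ι) (F : ι → (V [⋀^Fin k]→ₗ[ℝ] ℝ)) (w : Fin k → V) :
    (∑ i ∈ s, F i) w = ∑ i ∈ s, F i w := by
  induction s using Finset.cons_induction with
  | empty => rfl
  | cons a s ha ih => rw [Finset.sum_cons, Finset.sum_cons, AlternatingMap.add_apply, ih]

lemma exists_perm_comp {k : ℕ} {X : Type*} {v g : Fin k → X}
    (hv : Function.Injective v) (hg : Function.Injective g)
    (h : Set.range v = Set.range g) : ∃ σ : Equiv.Perm (Fin k), v = g ∘ σ := by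
  refine ⟨(Equiv.ofInjective v hv).trans ((Equiv.setCongr h).trans
    (Equiv.ofInjective g hg).symm), ?_⟩
  funext i
  simp [Equiv.apply_ofInjective_symm hg]


/-- On a `2n`-dimensional symplectic vector space there are no nonzero
effective `k`-forms for `k > n`. -/
theorem effective_eq_zero_of_gt
    {V : Type*} [AddCommGroup V] [Module ℝ V] [FiniteDimensional ℝ V] {n : ℕ}
    (hdim : Module.finrank ℝ V = 2 * n)
    (Ω : V [⋀^Fin 2]→ₗ[ℝ] ℝ) (hΩ : Nondeg Ω)
    {e f : Fin n → V} (hb : IsSymplecticBasis Ω e f)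
    (k : ℕ) (hk : n < k) (ω : V [⋀^Fin k]→ₗ[ℝ] ℝ) (hω : IsEff e f ω) :
    ω = 0 := by
  classical
  set B : Fin n ⊕ Fin n → V := Sum.elim e f with hBdef
  have hBinj : Function.Injective B := hb.indep.injective
  have hspan : ⊤ ≤ Submodule.span ℝ (Set.range B) := by rw [hb.span]
  let bas : Module.Basis (Fin n ⊕ Fin n) ℝ V := Module.Basis.mk hb.indep hspan
  have hbas : ∀ x, bas x = B x := fun x => Module.Basis.mk_apply hb.indep hspan x
  have hω' : lower e f ω = 0 := hω
  -- reduce to evaluation on injective tuples of basis vectors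
  refine Module.Basis.ext_alternating bas (fun v hv => ?_)
  have hbv : (fun i => bas (v i)) = fun i => B (v i) := funext fun i => hbas _
  rw [hbv, AlternatingMap.zero_apply]
  -- n ≥ 1
  have hn1 : 1 ≤ n := by
    by_contra hn
    have hn0 : n = 0 := by omega
    subst hn0
    rcases v ⟨0, by omega⟩ with x | x <;> exact x.elim0
  -- the image of `v`
  set img : Finset (Fin n ⊕ Fin n) := Finset.image v Finset.univ with himg
  have hkcard : img.card = k := by
    rw [himg, Finset.card_image_of_injective _ hv, Finset.card_univ, Fintype.card_fin]
  -- full pairs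
  set T : Finset (Fin n) :=
    Finset.univ.filter (fun i => Sum.inl i ∈ img ∧ Sum.inr i ∈ img) with hTdef
  set m := T.card with hmdef
  set PE : Finset (Fin n ⊕ Fin n) := T.image Sum.inl ∪ T.image Sum.inr with hPEdef
  have hPEsub : PE ⊆ img := by
    intro x hx
    rw [hPEdef, Finset.mem_union] at hx
    rcases hx with hx | hx <;>
      · obtain ⟨i, hi, rfl⟩ := Finset.mem_image.mp hx
        rw [hTdef, Finset.mem_filter] at hi
        tauto
  have hPEcard : PE.card = 2 * m := by
    rw [hPEdef, Finset.card_union_of_disjoint, Finset.card_image_of_injective _ Sum.inl_injective,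
      Finset.card_image_of_injective _ Sum.inr_injective]
    · omega
    · rw [Finset.disjoint_left]
      rintro x hx hx'
      obtain ⟨i, _, rfl⟩ := Finset.mem_image.mp hx
      obtain ⟨i', _, h⟩ := Finset.mem_image.mp hx'
      exact Sum.inl_ne_inr h.symm
  -- singles
  set A : Finset (Fin n ⊕ Fin n) := img \ PE with hAdef
  set t := A.card with htdef
  have hkt : k = t + 2 * m := by
    have h1 : A.card = img.card - PE.card := Finset.card_sdiff_of_subset hPEsub
    have h2 : PE.card ≤ img.card := Finset.card_le_card hPEsub
    omega
  -- an enumeration of the singles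
  let aEnum : Fin t → Fin n ⊕ Fin n := fun q => ((A.equivFin.symm q : A) : Fin n ⊕ Fin n)
  have haInj : Function.Injective aEnum :=
    Subtype.val_injective.comp A.equivFin.symm.injective
  have haRange : Set.range aEnum = (A : Set (Fin n ⊕ Fin n)) := by
    ext x
    constructor
    · rintro ⟨q, rfl⟩; exact (A.equivFin.symm q).2
    · intro hx
      exact ⟨A.equivFin ⟨x, hx⟩, by simp [aEnum]⟩
  set s : Fin t → V := fun q => B (aEnum q) with hsdef
  -- free indices
  set I : Finset (Fin n) :=
    Finset.univ.filter (fun i => Sum.inl i ∉ A ∧ Sum.inr i ∉ A) with hIdef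
  have hTI : T ⊆ I := by
    intro i hi
    rw [hIdef, Finset.mem_filter]
    have h1 : Sum.inl i ∈ PE := by
      rw [hPEdef, Finset.mem_union]
      exact Or.inl (Finset.mem_image_of_mem _ hi)
    have h2 : Sum.inr i ∈ PE := by
      rw [hPEdef, Finset.mem_union]
      exact Or.inr (Finset.mem_image_of_mem _ hi)
    refine ⟨Finset.mem_univ _, ?_, ?_⟩ <;> rw [hAdef, Finset.mem_sdiff] <;> tauto
  -- cardinality of I
  set D : Finset (Fin n) := A.image (Sum.elim id id) with hDdef
  have hDcard : D.card = t := by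
    rw [hDdef, htdef]
    apply Finset.card_image_of_injOn
    intro x hx y hy hxy
    have hAT : ∀ a : Fin n, Sum.inl a ∈ A → Sum.inr a ∈ A → False := by
      intro a h1 h2
      rw [hAdef, Finset.mem_sdiff] at h1 h2
      have haT : a ∈ T := by
        rw [hTdef, Finset.mem_filter]
        exact ⟨Finset.mem_univ _, h1.1, h2.1⟩
      exact h1.2 (by
        rw [hPEdef, Finset.mem_union]
        exact Or.inl (Finset.mem_image_of_mem _ haT))
    rw [Finset.mem_coe] at hx hy
    rcases x with x | x <;> rcases y with y | y <;>
      simp only [Sum.elim_inl, Sum.elim_inr, id_eq] at hxy <;> subst hxy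
    · rfl
    · exact (hAT x hx hy).elim
    · exact (hAT x hy hx).elim
    · rfl
  have hID : I = Dᶜ := by
    ext i
    rw [hIdef, Finset.mem_filter, Finset.mem_compl, hDdef, Finset.mem_image]
    constructor
    · rintro ⟨-, h1, h2⟩ ⟨x, hx, hxi⟩
      rcases x with x | x <;> simp only [Sum.elim_inl, Sum.elim_inr, id_eq] at hxi <;>
        subst hxi
      · exact h1 hx
      · exact h2 hx
    · intro h
      refine ⟨Finset.mem_univ _, fun hc => h ⟨_, hc, rfl⟩, fun hc => h ⟨_, hc, rfl⟩⟩
  have htn : t ≤ n := by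
    have h5 := Finset.card_le_univ D
    rw [hDcard] at h5
    simpa using h5
  have hIcard : I.card = n - t := by
    rw [hID, Finset.card_compl, hDcard, Fintype.card_fin]
  have hcardI : Fintype.card {x : Fin n // x ∈ I} = n - t := by
    rw [Fintype.card_coe, hIcard]
  -- the degree is at least 2
  obtain ⟨k2, rfl⟩ : ∃ k2, k = k2 + 2 := ⟨k - 2, by omega⟩
  -- the coefficient function
  set c : Finset {x : Fin n // x ∈ I} → ℝ :=
    fun P => valL e f s (P.toList.map Subtype.val) ω with hcdef
  -- vanishing lemmas for single terms
  have hvan1 : ∀ (i : Fin n) (l : List (Fin n)), i ∉ I → valL e f s (i :: l) ω = 0 := by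
    intro i l hi
    refine valL_notinj e f s (i :: l) ω (fun _ => ?_)
    rw [hIdef, Finset.mem_filter] at hi
    push_neg at hi
    have hi' := hi (Finset.mem_univ _)
    have hex : ∃ q : Fin t, s q = e i ∨ s q = f i := by
      by_cases hA : Sum.inl i ∈ A
      · have hmem : Sum.inl i ∈ Set.range aEnum := by
          rw [haRange]; exact_mod_cast hA
        obtain ⟨q, hq⟩ := hmem
        exact ⟨q, Or.inl (by show B (aEnum q) = e i; rw [hq]; rfl)⟩
      · have hA2 := hi' hA
        have hmem : Sum.inr i ∈ Set.range aEnum := by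
          rw [haRange]; exact_mod_cast hA2
        obtain ⟨q, hq⟩ := hmem
        exact ⟨q, Or.inr (by show B (aEnum q) = f i; rw [hq]; rfl)⟩
    obtain ⟨q, hq⟩ := hex
    exact tupG_not_inj_of_s e f s hq
  have hvan2 : ∀ (i : Fin n) (l : List (Fin n)), i ∈ l → valL e f s (i :: l) ω = 0 := by
    intro i l hi
    exact valL_notinj e f s (i :: l) ω (fun _ => tupG_not_inj_of_mem e f s hi)
  -- the relation coming from effectiveness
  have hrel : ∀ Q : Finset {x : Fin n // x ∈ I}, Q.card + 1 = m → upOp c Q = 0 := by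
    intro Q hQ
    set lQ : List (Fin n) := Q.toList.map Subtype.val with hlQ
    have hlen : lQ.length = Q.card := by
      rw [hlQ, List.length_map, Finset.length_toList]
    have hdeg : k2 = t + 2 * lQ.length := by omega
    set w : Fin k2 → V := fun i => tupG e f s lQ (finCongr hdeg i) with hwdef
    have hterm : ∀ i : Fin n,
        ((ω.curryLeft (e i)).curryLeft (f i)) w = valL e f s (i :: lQ) ω := by
      intro i
      have h1 : valL e f s (i :: lQ) ω = valL e f s lQ (insPair (e i) (f i) ω) := rfl
      rw [h1, valL_apply e f s lQ hdeg]
      rfl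
    have hsum : ∑ i : Fin n, valL e f s (i :: lQ) ω = 0 := by
      have h0 : lower e f ω w = 0 := by rw [hω']; rfl
      calc ∑ i : Fin n, valL e f s (i :: lQ) ω
          = ∑ i : Fin n, ((ω.curryLeft (e i)).curryLeft (f i)) w :=
            Finset.sum_congr rfl fun i _ => (hterm i).symm
        _ = (∑ i : Fin n, ((ω.curryLeft (e i)).curryLeft (f i))) w :=
            (altSum_apply _ _ _).symm
        _ = lower e f ω w := rfl
        _ = 0 := h0
    have hmemlQ : ∀ (x : {y : Fin n // y ∈ I}), (x : Fin n) ∈ lQ ↔ x ∈ Q := by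
      intro x
      rw [hlQ]
      simp only [List.mem_map, Finset.mem_toList]
      constructor
      · rintro ⟨y, hy, hxy⟩
        rwa [← Subtype.val_injective hxy]
      · intro hx; exact ⟨x, hx, rfl⟩
    have hcins : ∀ x : {y : Fin n // y ∈ I}, x ∉ Q →
        valL e f s ((x : Fin n) :: lQ) ω = c (insert x Q) := by
      intro x hx
      rw [hcdef]
      have hperm : ((insert x Q).toList.map Subtype.val).Perm ((x : Fin n) :: lQ) := by
        rw [hlQ]
        exact (Finset.toList_insert hx).map Subtype.val
      exact (valL_perm e f s hperm ω).symm
    -- split the sum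
    have h1 : ∑ i : Fin n, valL e f s (i :: lQ) ω = ∑ i ∈ I, valL e f s (i :: lQ) ω :=
      (Finset.sum_subset (Finset.subset_univ I) (fun i _ hi => hvan1 i lQ hi)).symm
    have h2 : ∑ i ∈ I, valL e f s (i :: lQ) ω
        = ∑ x : {y : Fin n // y ∈ I}, valL e f s ((x : Fin n) :: lQ) ω := by
      rw [Finset.univ_eq_attach]
      exact (Finset.sum_attach I _).symm
    have h3 : ∑ x : {y : Fin n // y ∈ I}, valL e f s ((x : Fin n) :: lQ) ω
        = ∑ x ∈ Qᶜ, valL e f s ((x : Fin n) :: lQ) ω := by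
      rw [← Finset.sum_add_sum_compl Q (fun x => valL e f s ((x : Fin n) :: lQ) ω)]
      have hz : ∑ x ∈ Q, valL e f s ((x : Fin n) :: lQ) ω = 0 :=
        Finset.sum_eq_zero fun x hx => hvan2 _ _ ((hmemlQ x).mpr hx)
      rw [hz, zero_add]
    have h4 : ∑ x ∈ Qᶜ, valL e f s ((x : Fin n) :: lQ) ω = upOp c Q := by
      rw [upOp]
      refine Finset.sum_congr rfl fun x hx => ?_
      exact hcins x (by simpa using hx)
    rw [← h4, ← h3, ← h2, ← h1]
    exact hsum
  -- apply the combinatorial lemma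
  have hN : Fintype.card {x : Fin n // x ∈ I} < 2 * m := by rw [hcardI]; omega
  set T' : Finset {x : Fin n // x ∈ I} := T.subtype (· ∈ I) with hT'def
  have hT'card : T'.card = m := by
    rw [hT'def, Finset.card_subtype, Finset.filter_true_of_mem (fun x hx => hTI hx)]
  have hc0 : c T' = 0 := comb_main m c hN hrel T' hT'card
  -- identify the original evaluation with `c T'`
  set lT : List (Fin n) := T'.toList.map Subtype.val with hlT
  have hlTlen : lT.length = m := by
    rw [hlT, List.length_map, Finset.length_toList, hT'card]
  have hdegT : k2 + 2 = t + 2 * lT.length := by omega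
  have hmemlT : ∀ x : Fin n, x ∈ lT ↔ x ∈ T := by
    intro x
    rw [hlT]
    simp only [List.mem_map, Finset.mem_toList]
    constructor
    · rintro ⟨y, hy, rfl⟩
      rw [hT'def, Finset.mem_subtype] at hy
      exact hy
    · intro hx
      exact ⟨⟨x, hTI hx⟩, by rw [hT'def, Finset.mem_subtype]; exact hx, rfl⟩
  have hndlT : lT.Nodup := by
    rw [hlT]
    exact (Finset.nodup_toList T').map Subtype.val_injective
  set gI : Fin (k2 + 2) → Fin n ⊕ Fin n :=
    fun i => tupG Sum.inl Sum.inr aEnum lT (finCongr hdegT i) with hgIdef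
  have helim : Function.Injective (Sum.elim (Sum.inl : Fin n → Fin n ⊕ Fin n) Sum.inr) := by
    have hid : (Sum.elim (Sum.inl : Fin n → Fin n ⊕ Fin n) Sum.inr) = id :=
      funext fun x => by rcases x with x | x <;> rfl
    rw [hid]; exact Function.injective_id
  have hdis : ∀ j ∈ lT, (Sum.inl j : Fin n ⊕ Fin n) ∉ Set.range aEnum
      ∧ (Sum.inr j : Fin n ⊕ Fin n) ∉ Set.range aEnum := by
    intro j hj
    have hjT : j ∈ T := (hmemlT j).mp hj
    rw [haRange]
    constructor <;> intro hc
    · rw [Finset.mem_coe, hAdef, Finset.mem_sdiff] at hc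
      exact hc.2 (by rw [hPEdef, Finset.mem_union]; exact Or.inl (Finset.mem_image_of_mem _ hjT))
    · rw [Finset.mem_coe, hAdef, Finset.mem_sdiff] at hc
      exact hc.2 (by rw [hPEdef, Finset.mem_union]; exact Or.inr (Finset.mem_image_of_mem _ hjT))
  have hginj : Function.Injective gI := by
    have h0 := tupG_injective Sum.inl Sum.inr aEnum helim haInj lT hndlT hdis
    exact h0.comp (finCongr hdegT).injective
  have hgrange : Set.range gI = Set.range v := by
    have h1 : Set.range gI = Set.range (tupG Sum.inl Sum.inr aEnum lT) := by
      ext x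
      constructor
      · rintro ⟨i, rfl⟩; exact ⟨finCongr hdegT i, rfl⟩
      · rintro ⟨p, rfl⟩; exact ⟨(finCongr hdegT).symm p, by simp [hgIdef]⟩
    rw [h1, tupG_range, haRange]
    have h2 : {j : Fin n | j ∈ lT} = (T : Set (Fin n)) := by
      ext j; rw [Set.mem_setOf_eq, hmemlT, Finset.mem_coe]
    rw [h2]
    have h3 : Set.range v = (img : Set (Fin n ⊕ Fin n)) := by
      rw [himg, Finset.coe_image, Finset.coe_univ, Set.image_univ]
    rw [h3]
    have h4 : (img : Set (Fin n ⊕ Fin n)) = ↑PE ∪ ↑A := by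
      rw [hAdef, ← Finset.coe_union, Finset.union_sdiff_of_subset hPEsub]
    rw [h4, hPEdef, Finset.coe_union, Finset.coe_image, Finset.coe_image]
  obtain ⟨σ, hσ⟩ := exists_perm_comp hv hginj hgrange.symm
  -- conclude
  have hfinal : ω (fun i => B (gI i)) = 0 := by
    have hBg : (fun i => B (gI i)) = fun i => tupG e f s lT (finCongr hdegT i) := by
      funext i
      have hc1 := congrFun (tupG_comp Sum.inl Sum.inr aEnum B lT) (finCongr hdegT i)
      have hc2 : tupG (B ∘ Sum.inl) (B ∘ Sum.inr) (B ∘ aEnum) lT (finCongr hdegT i)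
          = tupG e f s lT (finCongr hdegT i) := rfl
      exact hc1.trans hc2
    rw [hBg, ← valL_apply e f s lT hdegT]
    exact hc0
  have hvcomp : (fun i => B (v i)) = (fun i => B (gI i)) ∘ σ := by
    funext i
    rw [hσ]
    rfl
  rw [hvcomp, AlternatingMap.map_perm, hfinal, smul_zero]

end SymplSS
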